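/- Every even derivation f of degree (s,t) of the super w∞ 3-algebra with s + 2t ≠ 0 is an inner derivation; explicitly it is a linear combination of ad(L_{1+s}^t, L_{-1}^1), ad(L_1^0, L_{-1+s}^{1+t}), ad(L̄_{1+s}^t, L_{-1}^1), ad(L_1^0, L̄_{-1+s}^{1+t}). -/

import Mathlib

noncomputable section

/-- Basis indices of the super `w∞` 3-algebra: `L_m^i`, `L̄_m^i` (even) and
`h_m^{i+1/2}`, `h̄_m^{i+1/2}` (odd). -/
inductive WIdx : Type
  | L (m : ℤ) (i : ℕ)
  | Lb (m : ℤ) (i : ℕ)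
  | H (m : ℤ) (i : ℕ)
  | Hb (m : ℤ) (i : ℕ)
deriving DecidableEq

/-- The underlying superspace of the super `w∞` 3-algebra: the free `ℂ`-module on `WIdx`. -/
abbrev W : Type := WIdx →₀ ℂ

/-- Basis vectors. -/
def e (a : WIdx) : W := Finsupp.single a 1

/-- Parity of a basis index. -/
def par : WIdx → ZMod 2
  | .L _ _ => 0
  | .Lb _ _ => 0
  | .H _ _ => 1
  | .Hb _ _ => 1

/-- The sign `(-1)^a` of a parity. -/
def sg (a : ZMod 2) : ℂ := (-1 : ℂ) ^ a.val

/-- Structure constant `h(n−m)+j(m−k)+i(k−n)`. -/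
def co (m : ℤ) (i : ℕ) (n : ℤ) (j : ℕ) (k : ℤ) (h : ℕ) : ℂ :=
  (h : ℂ) * ((n : ℂ) - (m : ℂ)) + (j : ℂ) * ((m : ℂ) - (k : ℂ))
    + (i : ℂ) * ((k : ℂ) - (n : ℂ))

/-- Structure constant `i(p−r)+α(r−m)+β(m−p)`. -/
def dd (m : ℤ) (i : ℕ) (p : ℤ) (α : ℕ) (r : ℤ) (β : ℕ) : ℂ :=
  (i : ℂ) * ((p : ℂ) - (r : ℂ)) + (α : ℂ) * ((r : ℂ) - (m : ℂ))
    + (β : ℂ) * ((m : ℂ) - (p : ℂ))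

open WIdx in
/-- The 3-bracket of the super `w∞` 3-algebra on basis indices; unlisted brackets are
obtained by super-skew-symmetry or vanish. -/
def wbr : WIdx → WIdx → WIdx → W
  | L m i, L n j, L k u => co m i n j k u • e (L (m+n+k) (i+j+u-1))
  | L m i, L n j, Lb k u => co m i n j k u • e (Lb (m+n+k) (i+j+u-1))
  | L m i, Lb k u, L n j => co m i k u n j • e (Lb (m+n+k) (i+j+u-1))
  | Lb k u, L m i, L n j => co k u m i n j • e (Lb (m+n+k) (i+j+u-1))
  | L m i, L n j, H p α => co m i n j p α • e (H (m+n+p) (i+j+α-1))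
  | L m i, H p α, L n j => co m i p α n j • e (H (m+n+p) (i+j+α-1))
  | H p α, L m i, L n j => co p α m i n j • e (H (m+n+p) (i+j+α-1))
  | L m i, L n j, Hb p α => co m i n j p α • e (Hb (m+n+p) (i+j+α-1))
  | L m i, Hb p α, L n j => co m i p α n j • e (Hb (m+n+p) (i+j+α-1))
  | Hb p α, L m i, L n j => co p α m i n j • e (Hb (m+n+p) (i+j+α-1))
  | L m i, H p α, Hb r β => dd m i p α r β • e (Lb (m+p+r) (i+α+β-1))
  | L m i, Hb r β, H p α => dd m i p α r β • e (Lb (m+p+r) (i+α+β-1))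
  | H p α, L m i, Hb r β => (- dd m i p α r β) • e (Lb (m+p+r) (i+α+β-1))
  | Hb r β, L m i, H p α => (- dd m i p α r β) • e (Lb (m+p+r) (i+α+β-1))
  | H p α, Hb r β, L m i => dd m i p α r β • e (Lb (m+p+r) (i+α+β-1))
  | Hb r β, H p α, L m i => dd m i p α r β • e (Lb (m+p+r) (i+α+β-1))
  | _, _, _ => 0

/-- The trilinear extension of `wbr` to the whole of `W`. -/
def wbracket (x y z : W) : W :=
  x.sum fun a ca => y.sum fun b cb => z.sum fun c cc => (ca * cb * cc) • wbr a b c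

/-- The `ℤ/2`-grading of `w∞`: the span of the basis vectors of a given parity. -/
def wgr (j : ZMod 2) : Submodule ℂ W :=
  Submodule.span ℂ {w : W | ∃ a : WIdx, par a = j ∧ w = e a}

open WIdx

lemma wbracket_e₁ (x : W) (b c : WIdx) :
    wbracket x (e b) (e c) = x.sum fun a ca => ca • wbr a b c := by
  unfold wbracket e
  refine Finsupp.sum_congr fun a _ => ?_
  rw [Finsupp.sum_single_index (by simp), Finsupp.sum_single_index (by simp)]
  simp

lemma wbracket_e₂ (a : WIdx) (y : W) (c : WIdx) :
    wbracket (e a) y (e c) = y.sum fun b cb => cb • wbr a b c := by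
  unfold wbracket e
  rw [Finsupp.sum_single_index (by simp)]
  refine Finsupp.sum_congr fun b _ => ?_
  rw [Finsupp.sum_single_index (by simp)]
  simp

lemma wbracket_e₃ (a b : WIdx) (z : W) :
    wbracket (e a) (e b) z = z.sum fun c cc => cc • wbr a b c := by
  unfold wbracket e
  rw [Finsupp.sum_single_index (by simp), Finsupp.sum_single_index (by simp)]
  refine Finsupp.sum_congr fun c _ => ?_
  simp

lemma wbracket_eee (a b c : WIdx) : wbracket (e a) (e b) (e c) = wbr a b c := by
  rw [wbracket_e₃]
  unfold e
  rw [Finsupp.sum_single_index (by simp)]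
  simp
lemma sum_comb (p q : ℂ) (x y : WIdx) (F : WIdx → W) :
    Finsupp.sum (p • e x + q • e y) (fun a ca => ca • F a) = p • F x + q • F y := by
  unfold e
  rw [Finsupp.smul_single', Finsupp.smul_single', mul_one, mul_one]
  rw [Finsupp.sum_add_index' (fun a => zero_smul ℂ (F a)) (fun a b₁ b₂ => add_smul b₁ b₂ (F a))]
  rw [Finsupp.sum_single_index (zero_smul ℂ (F x)), Finsupp.sum_single_index (zero_smul ℂ (F y))]

lemma wbracket_comb₁ (p q : ℂ) (x y b c : WIdx) :
    wbracket (p • e x + q • e y) (e b) (e c) = p • wbr x b c + q • wbr y b c := by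
  rw [wbracket_e₁, sum_comb]

lemma wbracket_comb₂ (p q : ℂ) (a x y c : WIdx) :
    wbracket (e a) (p • e x + q • e y) (e c) = p • wbr a x c + q • wbr a y c := by
  rw [wbracket_e₂, sum_comb]

lemma wbracket_comb₃ (p q : ℂ) (a b x y : WIdx) :
    wbracket (e a) (e b) (p • e x + q • e y) = p • wbr a b x + q • wbr a b y := by
  rw [wbracket_e₃, sum_comb]

lemma wbracket_add₃ (a b : WIdx) (z z' : W) :
    wbracket (e a) (e b) (z + z') = wbracket (e a) (e b) z + wbracket (e a) (e b) z' := by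
  rw [wbracket_e₃, wbracket_e₃, wbracket_e₃,
    Finsupp.sum_add_index' (fun c => zero_smul ℂ (wbr a b c)) (fun c b₁ b₂ => add_smul b₁ b₂ (wbr a b c))]

lemma wbracket_zero₃ (a b : WIdx) : wbracket (e a) (e b) 0 = 0 := by
  rw [wbracket_e₃, Finsupp.sum_zero_index]

lemma wbracket_single₃ (a b c : WIdx) (r : ℂ) :
    wbracket (e a) (e b) (Finsupp.single c r) = r • wbr a b c := by
  rw [wbracket_e₃, Finsupp.sum_single_index (zero_smul ℂ (wbr a b c))]
lemma wbr_LLL (a c m : ℤ) (b d i : ℕ) :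
    wbr (L a b) (L c d) (L m i) = co a b c d m i • e (L (a+c+m) (b+d+i-1)) := rfl
lemma wbr_LLLb (a c m : ℤ) (b d i : ℕ) :
    wbr (L a b) (L c d) (Lb m i) = co a b c d m i • e (Lb (a+c+m) (b+d+i-1)) := rfl
lemma wbr_LLbL (a c m : ℤ) (b d i : ℕ) :
    wbr (L a b) (Lb c d) (L m i) = co a b c d m i • e (Lb (a+m+c) (b+i+d-1)) := rfl
lemma wbr_LbLL (a c m : ℤ) (b d i : ℕ) :
    wbr (Lb a b) (L c d) (L m i) = co a b c d m i • e (Lb (c+m+a) (d+i+b-1)) := rfl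
lemma wbr_LLH (a c m : ℤ) (b d i : ℕ) :
    wbr (L a b) (L c d) (H m i) = co a b c d m i • e (H (a+c+m) (b+d+i-1)) := rfl
lemma wbr_LLHb (a c m : ℤ) (b d i : ℕ) :
    wbr (L a b) (L c d) (Hb m i) = co a b c d m i • e (Hb (a+c+m) (b+d+i-1)) := rfl
lemma wbr_LbLLb (a c m : ℤ) (b d i : ℕ) : wbr (Lb a b) (L c d) (Lb m i) = 0 := rfl
lemma wbr_LLbLb (a c m : ℤ) (b d i : ℕ) : wbr (L a b) (Lb c d) (Lb m i) = 0 := rfl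
lemma wbr_LbLH (a c m : ℤ) (b d i : ℕ) : wbr (Lb a b) (L c d) (H m i) = 0 := rfl
lemma wbr_LLbH (a c m : ℤ) (b d i : ℕ) : wbr (L a b) (Lb c d) (H m i) = 0 := rfl
lemma wbr_LbLHb (a c m : ℤ) (b d i : ℕ) : wbr (Lb a b) (L c d) (Hb m i) = 0 := rfl
lemma wbr_LLbHb (a c m : ℤ) (b d i : ℕ) : wbr (L a b) (Lb c d) (Hb m i) = 0 := rfl
/-- every even derivation `f` of degree `(s,t)` of the super `w∞` 3-algebra
with `s + 2t ≠ 0` is inner: it is a linear combination of `ad(L_{1+s}^t, L_{-1}^1)`,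
`ad(L_1^0, L_{-1+s}^{1+t})`, `ad(L̄_{1+s}^t, L_{-1}^1)` and `ad(L_1^0, L̄_{-1+s}^{1+t})`. -/
theorem even_derivation_inner (s : ℤ) (t : ℕ) (hst : s + 2 * (t : ℤ) ≠ 0)
    (f : W →ₗ[ℂ] W)
    -- `f` is even of degree `(s,t)`
    (hdegL : ∀ (m : ℤ) (i : ℕ), ∃ α β : ℂ,
      f (e (.L m i)) = α • e (.L (m+s) (i+t)) + β • e (.Lb (m+s) (i+t)))
    (hdegLb : ∀ (m : ℤ) (i : ℕ), ∃ α β : ℂ,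
      f (e (.Lb m i)) = α • e (.L (m+s) (i+t)) + β • e (.Lb (m+s) (i+t)))
    (hdegH : ∀ (m : ℤ) (i : ℕ), ∃ α β : ℂ,
      f (e (.H m i)) = α • e (.H (m+s) (i+t)) + β • e (.Hb (m+s) (i+t)))
    (hdegHb : ∀ (m : ℤ) (i : ℕ), ∃ α β : ℂ,
      f (e (.Hb m i)) = α • e (.H (m+s) (i+t)) + β • e (.Hb (m+s) (i+t)))
    -- `f` is an (even) derivation
    (hder : ∀ a b c : WIdx,
      f (wbr a b c) = wbracket (f (e a)) (e b) (e c)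
        + wbracket (e a) (f (e b)) (e c) + wbracket (e a) (e b) (f (e c))) :
    ∃ c₁ c₂ c₃ c₄ : ℂ, ∀ w : W,
      f w = c₁ • wbracket (e (.L (1+s) t)) (e (.L (-1) 1)) w
        + c₂ • wbracket (e (.L 1 0)) (e (.L (-1+s) (1+t))) w
        + c₃ • wbracket (e (.Lb (1+s) t)) (e (.L (-1) 1)) w
        + c₄ • wbracket (e (.L 1 0)) (e (.Lb (-1+s) (1+t))) w := by
  choose aL bL hL using hdegL
  choose aLb bLb hLb using hdegLb
  choose aH bH hH using hdegH
  choose aHb bHb hHb using hdegHb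
  have hS : ((s:ℂ) + 2 * t) ≠ 0 := by
    intro hc; exact hst (by exact_mod_cast hc)
  have solv : ∀ (x p q u v : ℂ), x * ((s:ℂ) + 2*t) = p * u + q * v →
      x = p / ((s:ℂ)+2*t) * u + q / ((s:ℂ)+2*t) * v := by
    intro x p q u v h
    rw [div_mul_eq_mul_div, div_mul_eq_mul_div, ← add_div, eq_div_iff hS]
    exact h
  have keyL : ∀ (m : ℤ) (i : ℕ),
      aL m i * ((s:ℂ) + 2*t) = aL 1 0 * co (1+s) t (-1) 1 m i + aL (-1) 1 * co 1 0 (-1+s) (1+t) m i ∧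
      bL m i * ((s:ℂ) + 2*t) = bL 1 0 * co (1+s) t (-1) 1 m i + bL (-1) 1 * co 1 0 (-1+s) (1+t) m i := by
    intro m i
    have key := hder (.L 1 0) (.L (-1) 1) (.L m i)
    rw [wbr_LLL, show (1:ℤ) + -1 + m = m from by ring, show 0 + 1 + i - 1 = i from by omega,
      map_smul, hL m i, hL 1 0, hL (-1) 1] at key
    simp only [zero_add] at key
    rw [wbracket_comb₁, wbracket_comb₂, wbracket_comb₃] at key
    simp only [wbr_LLL, wbr_LbLL, wbr_LLbL, wbr_LLLb,
      show (1:ℤ) + s + -1 + m = m + s from by ring,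
      show t + 1 + i - 1 = i + t from by omega,
      show (-1) + m + (1 + s) = m + s from by ring,
      show 1 + i + t - 1 = i + t from by omega,
      show (1:ℤ) + (-1 + s) + m = m + s from by ring,
      show 0 + (1 + t) + i - 1 = i + t from by omega,
      show (1:ℤ) + m + (-1 + s) = m + s from by ring,
      show 0 + i + (1 + t) - 1 = i + t from by omega,
      show (1:ℤ) + -1 + (m + s) = m + s from by ring,
      show 0 + 1 + (i + t) - 1 = i + t from by omega] at key
    constructor
    · have kk := DFunLike.congr_fun key (WIdx.L (m+s) (i+t))
      simp [e, Finsupp.single_apply] at kk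
      simp only [co] at kk ⊢
      push_cast at kk ⊢
      linear_combination kk
    · have kk := DFunLike.congr_fun key (WIdx.Lb (m+s) (i+t))
      simp [e, Finsupp.single_apply] at kk
      simp only [co] at kk ⊢
      push_cast at kk ⊢
      linear_combination kk
  have keyLb : ∀ (m : ℤ) (i : ℕ),
      aLb m i = 0 ∧
      bLb m i * ((s:ℂ) + 2*t) = aL 1 0 * co (1+s) t (-1) 1 m i + aL (-1) 1 * co 1 0 (-1+s) (1+t) m i := by
    intro m i
    have key := hder (.L 1 0) (.L (-1) 1) (.Lb m i)
    rw [wbr_LLLb, show (1:ℤ) + -1 + m = m from by ring, show 0 + 1 + i - 1 = i from by omega,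
      map_smul, hLb m i, hL 1 0, hL (-1) 1] at key
    simp only [zero_add] at key
    rw [wbracket_comb₁, wbracket_comb₂, wbracket_comb₃] at key
    simp only [wbr_LLL, wbr_LLLb, wbr_LbLLb, wbr_LLbLb, smul_zero,
      show (1:ℤ) + s + -1 + m = m + s from by ring,
      show t + 1 + i - 1 = i + t from by omega,
      show (1:ℤ) + (-1 + s) + m = m + s from by ring,
      show 0 + (1 + t) + i - 1 = i + t from by omega,
      show (1:ℤ) + -1 + (m + s) = m + s from by ring,
      show 0 + 1 + (i + t) - 1 = i + t from by omega] at key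
    constructor
    · have kk := DFunLike.congr_fun key (WIdx.L (m+s) (i+t))
      simp [e, Finsupp.single_apply] at kk
      have h2 : aLb m i * ((s:ℂ) + 2*t) = 0 := by
        simp only [co] at kk; push_cast at kk; linear_combination kk
      exact (mul_eq_zero.mp h2).resolve_right hS
    · have kk := DFunLike.congr_fun key (WIdx.Lb (m+s) (i+t))
      simp [e, Finsupp.single_apply] at kk
      simp only [co] at kk ⊢
      push_cast at kk ⊢
      linear_combination kk
  have keyH : ∀ (m : ℤ) (i : ℕ),
      aH m i * ((s:ℂ) + 2*t) = aL 1 0 * co (1+s) t (-1) 1 m i + aL (-1) 1 * co 1 0 (-1+s) (1+t) m i ∧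
      bH m i = 0 := by
    intro m i
    have key := hder (.L 1 0) (.L (-1) 1) (.H m i)
    rw [wbr_LLH, show (1:ℤ) + -1 + m = m from by ring, show 0 + 1 + i - 1 = i from by omega,
      map_smul, hH m i, hL 1 0, hL (-1) 1] at key
    simp only [zero_add] at key
    rw [wbracket_comb₁, wbracket_comb₂, wbracket_comb₃] at key
    simp only [wbr_LLH, wbr_LLHb, wbr_LbLH, wbr_LLbH, smul_zero,
      show (1:ℤ) + s + -1 + m = m + s from by ring,
      show t + 1 + i - 1 = i + t from by omega,
      show (1:ℤ) + (-1 + s) + m = m + s from by ring,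
      show 0 + (1 + t) + i - 1 = i + t from by omega,
      show (1:ℤ) + -1 + (m + s) = m + s from by ring,
      show 0 + 1 + (i + t) - 1 = i + t from by omega] at key
    constructor
    · have kk := DFunLike.congr_fun key (WIdx.H (m+s) (i+t))
      simp [e, Finsupp.single_apply] at kk
      simp only [co] at kk ⊢
      push_cast at kk ⊢
      linear_combination kk
    · have kk := DFunLike.congr_fun key (WIdx.Hb (m+s) (i+t))
      simp [e, Finsupp.single_apply] at kk
      have h2 : bH m i * ((s:ℂ) + 2*t) = 0 := by
        simp only [co] at kk; push_cast at kk; linear_combination kk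
      exact (mul_eq_zero.mp h2).resolve_right hS
  have keyHb : ∀ (m : ℤ) (i : ℕ),
      aHb m i = 0 ∧
      bHb m i * ((s:ℂ) + 2*t) = aL 1 0 * co (1+s) t (-1) 1 m i + aL (-1) 1 * co 1 0 (-1+s) (1+t) m i := by
    intro m i
    have key := hder (.L 1 0) (.L (-1) 1) (.Hb m i)
    rw [wbr_LLHb, show (1:ℤ) + -1 + m = m from by ring, show 0 + 1 + i - 1 = i from by omega,
      map_smul, hHb m i, hL 1 0, hL (-1) 1] at key
    simp only [zero_add] at key
    rw [wbracket_comb₁, wbracket_comb₂, wbracket_comb₃] at key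
    simp only [wbr_LLH, wbr_LLHb, wbr_LbLHb, wbr_LLbHb, smul_zero,
      show (1:ℤ) + s + -1 + m = m + s from by ring,
      show t + 1 + i - 1 = i + t from by omega,
      show (1:ℤ) + (-1 + s) + m = m + s from by ring,
      show 0 + (1 + t) + i - 1 = i + t from by omega,
      show (1:ℤ) + -1 + (m + s) = m + s from by ring,
      show 0 + 1 + (i + t) - 1 = i + t from by omega] at key
    constructor
    · have kk := DFunLike.congr_fun key (WIdx.H (m+s) (i+t))
      simp [e, Finsupp.single_apply] at kk
      have h2 : aHb m i * ((s:ℂ) + 2*t) = 0 := by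
        simp only [co] at kk; push_cast at kk; linear_combination kk
      exact (mul_eq_zero.mp h2).resolve_right hS
    · have kk := DFunLike.congr_fun key (WIdx.Hb (m+s) (i+t))
      simp [e, Finsupp.single_apply] at kk
      simp only [co] at kk ⊢
      push_cast at kk ⊢
      linear_combination kk
  -- the four constants
  refine ⟨aL 1 0 / ((s:ℂ)+2*t), aL (-1) 1 / ((s:ℂ)+2*t),
    bL 1 0 / ((s:ℂ)+2*t), bL (-1) 1 / ((s:ℂ)+2*t), ?_⟩
  have hbasis : ∀ x : WIdx,
      f (e x) = (aL 1 0 / ((s:ℂ)+2*t)) • wbr (.L (1+s) t) (.L (-1) 1) x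
        + (aL (-1) 1 / ((s:ℂ)+2*t)) • wbr (.L 1 0) (.L (-1+s) (1+t)) x
        + (bL 1 0 / ((s:ℂ)+2*t)) • wbr (.Lb (1+s) t) (.L (-1) 1) x
        + (bL (-1) 1 / ((s:ℂ)+2*t)) • wbr (.L 1 0) (.Lb (-1+s) (1+t)) x := by
    intro x
    cases x with
    | L m i =>
      rw [hL m i]
      simp only [wbr_LLL, wbr_LbLL, wbr_LLbL,
        show (1:ℤ) + s + -1 + m = m + s from by ring,
        show t + 1 + i - 1 = i + t from by omega,
        show (-1) + m + (1 + s) = m + s from by ring,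
        show 1 + i + t - 1 = i + t from by omega,
        show (1:ℤ) + (-1 + s) + m = m + s from by ring,
        show 0 + (1 + t) + i - 1 = i + t from by omega,
        show (1:ℤ) + m + (-1 + s) = m + s from by ring,
        show 0 + i + (1 + t) - 1 = i + t from by omega]
      rw [solv _ _ _ _ _ (keyL m i).1, solv _ _ _ _ _ (keyL m i).2]
      module
    | Lb m i =>
      rw [hLb m i, (keyLb m i).1, zero_smul, zero_add]
      simp only [wbr_LLLb, wbr_LbLLb, wbr_LLbLb, smul_zero,
        show (1:ℤ) + s + -1 + m = m + s from by ring,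
        show t + 1 + i - 1 = i + t from by omega,
        show (1:ℤ) + (-1 + s) + m = m + s from by ring,
        show 0 + (1 + t) + i - 1 = i + t from by omega]
      rw [solv _ _ _ _ _ (keyLb m i).2]
      module
    | H m i =>
      rw [hH m i, (keyH m i).2, zero_smul, add_zero]
      simp only [wbr_LLH, wbr_LbLH, wbr_LLbH, smul_zero,
        show (1:ℤ) + s + -1 + m = m + s from by ring,
        show t + 1 + i - 1 = i + t from by omega,
        show (1:ℤ) + (-1 + s) + m = m + s from by ring,
        show 0 + (1 + t) + i - 1 = i + t from by omega]
      rw [solv _ _ _ _ _ (keyH m i).1]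
      module
    | Hb m i =>
      rw [hHb m i, (keyHb m i).1, zero_smul, zero_add]
      simp only [wbr_LLHb, wbr_LbLHb, wbr_LLbHb, smul_zero,
        show (1:ℤ) + s + -1 + m = m + s from by ring,
        show t + 1 + i - 1 = i + t from by omega,
        show (1:ℤ) + (-1 + s) + m = m + s from by ring,
        show 0 + (1 + t) + i - 1 = i + t from by omega]
      rw [solv _ _ _ _ _ (keyHb m i).2]
      module
  intro w
  induction w using Finsupp.induction_linear with
  | zero => simp [wbracket_zero₃]
  | add x y hx hy =>
      rw [map_add, hx, hy, wbracket_add₃, wbracket_add₃, wbracket_add₃, wbracket_add₃]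
      module
  | single a b =>
      have hs : (Finsupp.single a b : W) = b • e a := by
        simp [e, Finsupp.smul_single']
      rw [wbracket_single₃, wbracket_single₃, wbracket_single₃, wbracket_single₃,
        hs, map_smul, hbasis a]
      module
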